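/- Let k be a commutative ring and n ≥ 2 an integer, and let Y be the prime spectrum of kⁿ with its Zariski topology and structure sheaf 𝒪_Y (regarded as a sheaf of not necessarily commutative rings via the forgetful functor). Let X be a topological space, F a sheaf of rings on X, and f : X → Y a continuous map, and let f_*F denote the pushforward sheaf on Y, defined by (f_*F)(V) = F(f⁻¹(V)). Suppose there is a morphism of sheaves of rings α : 𝒪_Y → f_*F and a unital ring homomorphism β : Mₙ(k) → F(X) such that the composite kⁿ → 𝒪_Y(Y) → (f_*F)(Y) = F(X) (the canonical map from kⁿ to global sections of the structure sheaf followed by the global component of α) equals β ∘ d, where d : kⁿ → Mₙ(k) is the diagonal embedding. Then F(U) is the trivial ring for every open set U ⊆ X; in particular the ring of global sections F(X) is trivial. -/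

import Mathlib

universe u

open CategoryTheory Opposite AlgebraicGeometry TopologicalSpace TopCat

theorem stmt_14 (k : Type u) [CommRing k] (n : ℕ) (hn : 2 ≤ n)
    (X : TopCat.{u}) (F : TopCat.Sheaf RingCat.{u} X)
    (f : X ⟶ PrimeSpectrum.Top (Fin n → k))
    (α : (Spec.structureSheaf (Fin n → k)).val ⋙ forget₂ CommRingCat RingCat ⟶
      f _* F.val)
    (β : Matrix (Fin n) (Fin n) k →+* F.val.obj (op ⊤))
    (hcomp : ∀ a : Fin n → k,
      α.app (op ⊤) (StructureSheaf.toOpen (Fin n → k) ⊤ a) =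
        F.val.map (homOfLE (le_top : (Opens.map f).obj ⊤ ≤ ⊤)).op
          (β (Matrix.diagonalRingHom (Fin n) k a))) :
    ∀ U : Opens X, Subsingleton (F.val.obj (op U)) := by
  classical
  let e : Fin n → (Fin n → k) := fun i => Pi.single i 1
  let V : Fin n → Opens (PrimeSpectrum.Top (Fin n → k)) := fun i => PrimeSpectrum.basicOpen (e i)
  let E : Fin n → Fin n → Matrix (Fin n) (Fin n) k := fun i j => Matrix.single i j 1
  have hdiag : ∀ j, Matrix.diagonalRingHom (Fin n) k (e j) = E j j := by
    intro j
    ext a b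
    by_cases h1 : a = j <;> by_cases h2 : b = j <;>
      simp [E, e, Matrix.diagonalRingHom_apply, Matrix.diagonal_apply, Matrix.single,
        Pi.single_apply, h1, h2, Ne.symm, eq_comm]
  -- opens in X
  let U : Fin n → Opens X := fun i => (Opens.map f).obj (V i)
  -- restriction to U i
  let r : ∀ i, F.val.obj (op ⊤) ⟶ F.val.obj (op (U i)) :=
    fun i => F.val.map (homOfLE le_top).op
  -- value of toOpen on V i
  have htoOpen : ∀ i j, StructureSheaf.toOpen (Fin n → k) (V i) (e j) =
      if j = i then 1 else 0 := by
    intro i j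
    have hu : IsUnit (StructureSheaf.toOpen (Fin n → k) (V i) (e i)) :=
      @IsLocalization.Away.algebraMap_isUnit _ _ _ _ (_) (e i) (StructureSheaf.IsLocalization.to_basicOpen _ (e i))
    by_cases h : j = i
    · subst h
      have hsq : e j * e j = e j := by
        ext a; by_cases h : a = j <;> simp [e, Pi.mul_apply, Pi.single_apply, h]
      have : StructureSheaf.toOpen (Fin n → k) (V j) (e j) * StructureSheaf.toOpen (Fin n → k) (V j) (e j)
          = StructureSheaf.toOpen (Fin n → k) (V j) (e j) * 1 := by
        rw [← map_mul, hsq, mul_one]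
      simpa using hu.mul_left_cancel this
    · have hz : e j * e i = 0 := by
        ext a
        by_cases h1 : a = j
        · have h2 : a ≠ i := fun hh => h (h1.symm.trans hh)
          simp [e, Pi.mul_apply, Pi.single_apply, h1, h2, h]
        · simp [e, Pi.mul_apply, Pi.single_apply, h1]
      have : StructureSheaf.toOpen (Fin n → k) (V i) (e j) * StructureSheaf.toOpen (Fin n → k) (V i) (e i)
          = 0 * StructureSheaf.toOpen (Fin n → k) (V i) (e i) := by
        rw [← map_mul, hz, map_zero, zero_mul]
      simp [h, hu.mul_right_cancel this]
  -- key computation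
  have key : ∀ i j, r i (β (E j j)) = if j = i then 1 else 0 := by
    intro i j
    have hnat := ConcreteCategory.congr_hom (α.naturality (homOfLE (le_top : V i ≤ ⊤)).op)
      (StructureSheaf.toOpen (Fin n → k) ⊤ (e j))
    simp only [Functor.comp_map, comp_apply] at hnat
    have hres : ((forget₂ CommRingCat RingCat).map
        ((Spec.structureSheaf (Fin n → k)).val.map (homOfLE (le_top : V i ≤ ⊤)).op))
        (StructureSheaf.toOpen (Fin n → k) ⊤ (e j)) = StructureSheaf.toOpen (Fin n → k) (V i) (e j) := rfl
    have hcomb : ∀ x : F.val.obj (op ⊤),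
        (((Presheaf.pushforward RingCat f).obj F.val).map (homOfLE (le_top : V i ≤ ⊤)).op)
          ((F.val.map (homOfLE (le_top : (Opens.map f).obj ⊤ ≤ ⊤)).op) x) = r i x := by
      intro x
      show (F.val.map ((Opens.map f).map (homOfLE le_top)).op)
          ((F.val.map (homOfLE le_top).op) x) = r i x
      rw [← comp_apply, ← F.val.map_comp, ← op_comp]
      rfl
    rw [← hdiag j, ← hcomb (β (Matrix.diagonalRingHom (Fin n) k (e j))), ← hcomp (e j), ← hnat]
    show (α.app (op (V i))) (StructureSheaf.toOpen (Fin n → k) (V i) (e j)) = _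
    rw [htoOpen i j]
    split <;> simp
  haveI : Nontrivial (Fin n) := Fin.nontrivial_iff_two_le.mpr hn
  -- 1 = 0 in F(U i)
  have hone : ∀ i, (1 : F.val.obj (op (U i))) = 0 := by
    intro i
    obtain ⟨j, hj⟩ := exists_ne i
    have h1 : r i (β (E i i)) = 1 := by rw [key i i, if_pos rfl]
    have h2 : r i (β (E j j)) = 0 := by rw [key i j, if_neg hj]
    have hEii : E i i = E i j * E j i := by
      simp [E, Matrix.single_mul_single_same]
    have hEji : E j i = E j j * E j i := by
      simp [E, Matrix.single_mul_single_same]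
    have hzero : r i (β (E j i)) = 0 := by
      rw [hEji, map_mul, map_mul, h2, zero_mul]
    calc (1 : F.val.obj (op (U i))) = r i (β (E i i)) := h1.symm
      _ = r i (β (E i j)) * r i (β (E j i)) := by rw [hEii, map_mul, map_mul]
      _ = 0 := by rw [hzero, mul_zero]
  -- the U i cover X
  have hVtop : (⨆ i, V i) = ⊤ := by
    have : Ideal.span (Set.range e) = ⊤ := by
      rw [Ideal.eq_top_iff_one]
      have hsum : (1 : Fin n → k) = ∑ i, e i := by
        ext a; simp [e, Pi.single_apply]
      rw [hsum]
      exact Ideal.sum_mem _ fun i _ => Ideal.subset_span ⟨i, rfl⟩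
    exact PrimeSpectrum.iSup_basicOpen_eq_top_iff.mpr this
  -- conclude
  intro U0
  have h10 : (1 : F.val.obj (op U0)) = 0 := by
    refine F.eq_of_locally_eq' (fun i : ULift.{u} (Fin n) => U0 ⊓ U i.down) U0
      (fun i => homOfLE inf_le_left) ?_ _ _ ?_
    · intro x hx
      have hfx : f x ∈ (⊤ : Opens (PrimeSpectrum.Top (Fin n → k))) := trivial
      rw [← hVtop] at hfx
      obtain ⟨i, hi⟩ := Opens.mem_iSup.mp hfx
      exact Opens.mem_iSup.mpr ⟨⟨i⟩, hx, hi⟩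
    · intro i
      have h0 : (1 : F.val.obj (op (U0 ⊓ U i.down))) = 0 := by
        have := congrArg (F.val.map (homOfLE (inf_le_right : U0 ⊓ U i.down ≤ U i.down)).op)
          (hone i.down)
        simpa using this
      show F.val.map (homOfLE (inf_le_left : U0 ⊓ U i.down ≤ U0)).op (1 : F.val.obj (op U0)) =
        F.val.map (homOfLE (inf_le_left : U0 ⊓ U i.down ≤ U0)).op (0 : F.val.obj (op U0))
      rw [map_one, map_zero]
      exact h0
  exact subsingleton_of_zero_eq_one h10.symm
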